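/- Every 3-connected finite simple graph of order n contains a cycle of length at most 2·log₂ n. -/

import Mathlib

open SimpleGraph

namespace ShortCycleAux

variable {V : Type} {G : SimpleGraph V}

lemma getVert_one_of_edge_mem {v u z : V} (p : G.Walk v u) (hp : p.IsPath)
    (he : s(v, z) ∈ p.edges) : p.getVert 1 = z := by
  cases p with
  | nil => simp at he
  | cons h p' =>
    rw [Walk.edges_cons, List.mem_cons] at he
    rcases he with he | he
    · rw [Sym2.eq_iff] at he
      rcases he with ⟨-, rfl⟩ | ⟨h1, h2⟩
      · simp [Walk.getVert_cons_succ, Walk.getVert_zero]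
      · exact absurd h1 h.ne
    · exact absurd (Walk.fst_mem_support_of_mem_edges p' he)
        ((Walk.cons_isPath_iff h p').mp hp).2

lemma firstPrefix (pred : V → Prop) [DecidablePred pred] {a u : V} (w : G.Walk a u)
    (hu : pred u) :
    ∃ (x : V) (w1 : G.Walk a x), pred x ∧ (∀ y ∈ w1.support, y ∈ w.support) ∧
      w1.length ≤ w.length ∧ (w.IsPath → w1.IsPath) ∧
      (∀ y ∈ w1.support, pred y → y = x) := by
  induction w with
  | nil =>
    exact ⟨_, Walk.nil, hu, by simp, le_rfl, fun h => h, by simp⟩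
  | @cons b c d h w' ih =>
    by_cases hb : pred b
    · refine ⟨b, Walk.nil, hb, ?_, Nat.zero_le _, fun _ => Walk.IsPath.nil, ?_⟩
      · intro y hy; simp at hy; subst hy; exact Walk.start_mem_support _
      · intro y hy _; simpa using hy
    · obtain ⟨x, w1, hx, hsub, hlen, hpath, hlast⟩ := ih hu
      refine ⟨x, Walk.cons h w1, hx, ?_, ?_, ?_, ?_⟩
      · intro y hy
        rw [Walk.support_cons, List.mem_cons] at hy ⊢
        exact hy.imp id (fun h' => hsub y h')
      · simpa using Nat.succ_le_succ hlen
      · intro hcons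
        rw [Walk.cons_isPath_iff] at hcons ⊢
        exact ⟨hpath hcons.1, fun hmem => hcons.2 (hsub _ hmem)⟩
      · intro y hy hpy
        rw [Walk.support_cons, List.mem_cons] at hy
        rcases hy with h1 | hy
        · exact absurd (h1 ▸ hpy) hb
        · exact hlast y hy hpy

lemma glue_isCycle {v x : V} (p q : G.Walk v x) (hp : p.IsPath) (hq : q.IsPath)
    (hvx : v ≠ x) (hint : ∀ y, y ∈ p.support → y ∈ q.support → y = v ∨ y = x)
    (hno : ¬(s(v, x) ∈ p.edges ∧ s(v, x) ∈ q.edges)) :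
    (p.append q.reverse).IsCycle := by
  have hedge_mem : ∀ (r : G.Walk v x) (y z : V), s(y, z) ∈ r.edges →
      y ∈ r.support ∧ z ∈ r.support ∧ y ≠ z := by
    intro r y z he
    refine ⟨Walk.fst_mem_support_of_mem_edges r he,
      Walk.fst_mem_support_of_mem_edges r (by rwa [Sym2.eq_swap] at he), ?_⟩
    have := r.edges_subset_edgeSet he
    rw [SimpleGraph.mem_edgeSet] at this
    exact this.ne
  rw [Walk.isCycle_def]
  refine ⟨?_, ?_, ?_⟩
  · -- trail
    rw [Walk.isTrail_def, Walk.edges_append, Walk.edges_reverse]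
    rw [List.nodup_append]
    refine ⟨hp.isTrail.edges_nodup, (List.nodup_reverse.mpr hq.isTrail.edges_nodup), ?_⟩
    intro e hep e' heq' hee; subst hee
    have heq : e ∈ q.edges := List.mem_reverse.mp heq'
    induction e using Sym2.ind with
    | _ y z =>
      obtain ⟨hyp, hzp, hyz⟩ := hedge_mem p y z hep
      obtain ⟨hyq, hzq, -⟩ := hedge_mem q y z heq
      have hy := hint y hyp hyq
      have hz := hint z hzp hzq
      have hevx : s(y, z) = s(v, x) := by
        rcases hy with rfl | rfl <;> rcases hz with rfl | rfl
        · exact absurd rfl hyz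
        · rfl
        · rw [Sym2.eq_swap]
        · exact absurd rfl hyz
      exact hno ⟨hevx ▸ hep, hevx ▸ heq⟩
  · -- nonnil
    intro hnil
    have := congrArg Walk.length hnil
    rw [Walk.length_append, Walk.length_reverse] at this
    simp only [Walk.length_nil] at this
    have hp0 : p.length = 0 := by omega
    exact hvx (Walk.eq_of_length_eq_zero hp0)
  · -- support tail nodup
    have hsupp : (p.append q.reverse).support.tail
        = p.support.tail ++ q.reverse.support.tail := by
      rw [Walk.support_append]
      rw [p.support_eq_cons]
      simp
    rw [hsupp, List.nodup_append]
    have hqr : q.reverse.IsPath := hq.reverse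
    refine ⟨hp.support_nodup.sublist (List.tail_sublist _),
      hqr.support_nodup.sublist (List.tail_sublist _), ?_⟩
    intro y hyp y' hyq hyy; subst hyy
    have hyps : y ∈ p.support := List.mem_of_mem_tail hyp
    have hyqs : y ∈ q.support := by
      have : y ∈ q.reverse.support := List.mem_of_mem_tail hyq
      rwa [Walk.support_reverse, List.mem_reverse] at this
    have hyv : y ≠ v := by
      rintro rfl
      have := hp.support_nodup
      rw [p.support_eq_cons] at this
      exact (List.nodup_cons.mp this).1 hyp
    have hyx : y ≠ x := by
      rintro rfl
      have := hqr.support_nodup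
      rw [q.reverse.support_eq_cons] at this
      exact (List.nodup_cons.mp this).1 hyq
    rcases hint y hyps hyqs with rfl | rfl
    · exact hyv rfl
    · exact hyx rfl

lemma two_paths [DecidableEq V] :
    ∀ (n : ℕ) {v u : V} (p q : G.Walk v u), p.IsPath → q.IsPath → p ≠ q →
      p.length + q.length ≤ n →
    ∃ (x : V) (c : G.Walk x x), c.IsCycle ∧ c.length ≤ p.length + q.length := by
  intro n
  induction n with
  | zero =>
    intro v u p q hp hq hne hlen
    cases p with
    | nil =>
      cases q with
      | nil => exact absurd rfl hne
      | cons h q' => simp [Walk.length_cons] at hlen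
    | cons h p' => simp [Walk.length_cons] at hlen
  | succ n ih =>
    intro v u p q hp hq hne hlen
    cases p with
    | nil =>
      rw [(Walk.isPath_iff_eq_nil).mp hq] at hne
      exact absurd rfl hne
    | @cons _ a _ h p' =>
      cases q with
      | nil => exact absurd ((Walk.isPath_iff_eq_nil).mp hp) (by simp)
      | @cons _ b _ h' q' =>
        by_cases hab : a = b
        · subst hab
          have hne' : p' ≠ q' := by
            rintro rfl
            exact hne rfl
          obtain ⟨x, c, hc, hcl⟩ := ih p' q'
            ((Walk.cons_isPath_iff h p').mp hp).1
            ((Walk.cons_isPath_iff h' q').mp hq).1 hne'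
            (by simp [Walk.length_cons] at hlen; omega)
          exact ⟨x, c, hc, by simp [Walk.length_cons]; omega⟩
        · -- a ≠ b
          have hp' := ((Walk.cons_isPath_iff h p').mp hp).1
          have hvp' : v ∉ p'.support := ((Walk.cons_isPath_iff h p').mp hp).2
          have hpu : u ∈ (Walk.cons h' q').support := Walk.end_mem_support _
          obtain ⟨x, w1, hx, hsub, hlen1, hpath1, hlast⟩ :=
            firstPrefix (· ∈ (Walk.cons h' q').support) p' hpu
          have hw1 : w1.IsPath := hpath1 hp'
          have hvw1 : v ∉ w1.support := fun hmem => hvp' (hsub _ hmem)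
          have hp1 : (Walk.cons h w1).IsPath :=
            (Walk.cons_isPath_iff h w1).mpr ⟨hw1, hvw1⟩
          have hvx : v ≠ x := by
            rintro rfl
            exact hvp' (hsub _ (Walk.end_mem_support w1))
          set q1 : G.Walk v x := (Walk.cons h' q').takeUntil x hx with hq1def
          have hq1 : q1.IsPath := hq.takeUntil hx
          have hq1len : q1.length ≤ (Walk.cons h' q').length :=
            Walk.length_takeUntil_le _ hx
          have hint : ∀ y, y ∈ (Walk.cons h w1).support → y ∈ q1.support →
              y = v ∨ y = x := by
            intro y hy1 hy2
            rw [Walk.support_cons, List.mem_cons] at hy1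
            rcases hy1 with rfl | hy1
            · exact Or.inl rfl
            · exact Or.inr (hlast y hy1 (Walk.support_takeUntil_subset _ hx hy2))
          have hno : ¬(s(v, x) ∈ (Walk.cons h w1).edges ∧ s(v, x) ∈ q1.edges) := by
            rintro ⟨e1, e2⟩
            have hxa : x = a := by
              have := getVert_one_of_edge_mem (Walk.cons h w1) hp1 e1
              rw [Walk.getVert_cons_succ, Walk.getVert_zero] at this
              exact this.symm
            have hxb : x = b := by
              have e2' : s(v, x) ∈ (Walk.cons h' q').edges :=
                Walk.edges_takeUntil_subset _ hx e2
              have := getVert_one_of_edge_mem (Walk.cons h' q') hq e2'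
              rw [Walk.getVert_cons_succ, Walk.getVert_zero] at this
              exact this.symm
            exact hab (hxa ▸ hxb ▸ rfl)
          refine ⟨v, (Walk.cons h w1).append q1.reverse,
            glue_isCycle _ _ hp1 hq1 hvx hint hno, ?_⟩
          rw [Walk.length_append, Walk.length_reverse]
          simp only [Walk.length_cons] at *
          omega

lemma concat_isPath {u w z : V} (p : G.Walk u w) (h : G.Adj w z)
    (hp : p.IsPath) (hz : z ∉ p.support) : (p.concat h).IsPath := by
  rw [Walk.isPath_def, Walk.support_concat, List.nodup_append]
  refine ⟨hp.support_nodup, List.nodup_singleton _, ?_⟩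
  intro a ha b hb hab
  rw [List.mem_singleton] at hb
  subst hb hab
  exact hz ha

lemma moore [Fintype V] [DecidableEq V] [DecidableRel G.Adj]
    (v : V) (k : ℕ) (hk : 1 ≤ k) (hdeg : ∀ w, 3 ≤ G.degree w)
    (hgirth : ∀ (x : V) (c : G.Walk x x), c.IsCycle → 2 * k < c.length) :
    2 ^ (k + 1) ≤ Fintype.card V := by
  classical
  have huniq : ∀ {u : V} (p q : G.Walk v u), p.IsPath → q.IsPath →
      p.length ≤ k → q.length ≤ k → p = q := by
    intro u p q hp hq hpl hql
    by_contra hne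
    obtain ⟨x, c, hc, hcl⟩ := two_paths (p.length + q.length) p q hp hq hne le_rfl
    have := hgirth x c hc
    omega
  set S : ℕ → Finset V :=
    fun j => Finset.univ.filter (fun u => ∃ p : G.Walk v u, p.IsPath ∧ p.length = j)
    with hSdef
  have hmemS : ∀ (j : ℕ) (u : V), u ∈ S j ↔ ∃ p : G.Walk v u, p.IsPath ∧ p.length = j := by
    intro j u
    simp [hSdef]
  have hdisj : ∀ i j, i ≤ k → j ≤ k → i ≠ j → Disjoint (S i) (S j) := by
    intro i j hi hj hij
    rw [Finset.disjoint_left]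
    intro u hui huj
    obtain ⟨p, hp, hpl⟩ := (hmemS i u).mp hui
    obtain ⟨q, hq, hql⟩ := (hmemS j u).mp huj
    have := huniq p q hp hq (by omega) (by omega)
    subst this
    omega
  have hS0 : (S 0).card = 1 := by
    have : S 0 = {v} := by
      ext u
      rw [hmemS, Finset.mem_singleton]
      constructor
      · rintro ⟨p, hp, hpl⟩
        exact (Walk.eq_of_length_eq_zero hpl).symm
      · rintro rfl
        exact ⟨Walk.nil, Walk.IsPath.nil, rfl⟩
    rw [this, Finset.card_singleton]
  have hS1 : 3 ≤ (S 1).card := by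
    have hsub : G.neighborFinset v ⊆ S 1 := by
      intro z hz
      rw [SimpleGraph.mem_neighborFinset] at hz
      rw [hmemS]
      refine ⟨Walk.cons hz Walk.nil, ?_, rfl⟩
      rw [Walk.cons_isPath_iff]
      exact ⟨Walk.IsPath.nil, by simp [hz.ne]⟩
    calc 3 ≤ G.degree v := hdeg v
    _ = (G.neighborFinset v).card := rfl
    _ ≤ (S 1).card := Finset.card_le_card hsub
  -- growth step
  have hstep : ∀ j, 1 ≤ j → j + 1 ≤ k → 2 * (S j).card ≤ (S (j + 1)).card := by
    intro j hj1 hjk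
    -- Ext w z : z has a path of length j+1 whose penultimate vertex is w
    set Ext : V → V → Prop := fun w z =>
      ∃ p : G.Walk v z, p.IsPath ∧ p.length = j + 1 ∧ p.reverse.getVert 1 = w
      with hExtdef
    have key : ∀ w : V, ∃ pr : V × V, w ∈ S j →
        pr.1 ≠ pr.2 ∧ Ext w pr.1 ∧ Ext w pr.2 := by
      intro w
      by_cases hw : w ∈ S j
      swap
      · exact ⟨(w, w), fun hw' => absurd hw' hw⟩
      obtain ⟨pw, hpw, hpwl⟩ := (hmemS j w).mp hw
      -- bad neighbors (those on pw.support) are all equal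
      have hbad : ∀ z ∈ G.neighborFinset w ∩ pw.support.toFinset,
          z = pw.reverse.getVert 1 := by
        intro z hz
        rw [Finset.mem_inter, SimpleGraph.mem_neighborFinset, List.mem_toFinset] at hz
        obtain ⟨hadj, hzs⟩ := hz
        set d : G.Walk z w := pw.dropUntil z hzs with hddef
        have hd : d.IsPath := hpw.dropUntil hzs
        have hdlen : d.length ≤ pw.length := Walk.length_dropUntil_le pw hzs
        have hnc : ¬(Walk.cons hadj d).IsCycle := by
          intro hc
          have := hgirth w _ hc
          rw [Walk.length_cons] at this
          omega
        rw [Walk.cons_isCycle_iff] at hnc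
        push_neg at hnc
        have hedge : s(w, z) ∈ d.edges := hnc hd
        have hedge' : s(w, z) ∈ pw.edges := Walk.edges_dropUntil_subset pw hzs hedge
        have hedge'' : s(w, z) ∈ pw.reverse.edges := by
          rw [Walk.edges_reverse, List.mem_reverse]
          exact hedge'
        exact (getVert_one_of_edge_mem pw.reverse hpw.reverse hedge'').symm
      have hcard2 : 2 ≤ (G.neighborFinset w \ pw.support.toFinset).card := by
        have h1 : (G.neighborFinset w ∩ pw.support.toFinset).card ≤ 1 := by
          apply Finset.card_le_one.mpr
          intro a ha b hb
          rw [hbad a ha, hbad b hb]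
        have h2 : G.neighborFinset w \ pw.support.toFinset
            = G.neighborFinset w \ (G.neighborFinset w ∩ pw.support.toFinset) := by
          rw [Finset.sdiff_inter_self_left]
        rw [h2, Finset.card_sdiff_of_subset (Finset.inter_subset_left)]
        have := hdeg w
        rw [SimpleGraph.degree] at this
        omega
      obtain ⟨z1, hz1, z2, hz2, hz12⟩ := Finset.one_lt_card.mp
        (by omega : 1 < (G.neighborFinset w \ pw.support.toFinset).card)
      have hmk : ∀ z ∈ G.neighborFinset w \ pw.support.toFinset, Ext w z := by
        intro z hz
        rw [Finset.mem_sdiff, SimpleGraph.mem_neighborFinset, List.mem_toFinset] at hz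
        obtain ⟨hadj, hzs⟩ := hz
        refine ⟨pw.concat hadj, ?_, ?_, ?_⟩
        · exact concat_isPath pw hadj hpw hzs
        · rw [Walk.length_concat, hpwl]
        · rw [Walk.reverse_concat, Walk.getVert_cons_succ, Walk.getVert_zero]
      exact ⟨(z1, z2), fun _ => ⟨hz12, hmk z1 hz1, hmk z2 hz2⟩⟩
    choose g hg using key
    set f : V × Bool → V := fun wb => if wb.2 then (g wb.1).1 else (g wb.1).2 with hfdef
    have hmaps : ∀ wb ∈ S j ×ˢ (Finset.univ : Finset Bool), f wb ∈ S (j + 1) := by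
      rintro ⟨w, b⟩ hwb
      rw [Finset.mem_product] at hwb
      obtain ⟨hz12, he1, he2⟩ := hg w hwb.1
      rw [hmemS]
      cases b
      · obtain ⟨p, hp, hpl, -⟩ := he2
        exact ⟨p, hp, hpl⟩
      · obtain ⟨p, hp, hpl, -⟩ := he1
        exact ⟨p, hp, hpl⟩
    have hinj : Set.InjOn f ↑(S j ×ˢ (Finset.univ : Finset Bool)) := by
      rintro ⟨w, b⟩ hwb ⟨w', b'⟩ hwb' heq
      rw [Finset.mem_coe, Finset.mem_product] at hwb hwb'
      have hw : w ∈ S j := hwb.1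
      have hw' : w' ∈ S j := hwb'.1
      obtain ⟨hz12, he1, he2⟩ := hg w hw
      obtain ⟨hz12', he1', he2'⟩ := hg w' hw'
      -- the common image point
      have hext : Ext w (f (w, b)) := by
        cases b
        · simpa [hfdef] using he2
        · simpa [hfdef] using he1
      have hext' : Ext w' (f (w, b)) := by
        rw [heq]
        cases b'
        · simpa [hfdef] using he2'
        · simpa [hfdef] using he1'
      obtain ⟨p, hp, hpl, hpv⟩ := hext
      obtain ⟨p', hp', hpl', hpv'⟩ := hext'
      have hpp' : p = p' := huniq p p' hp hp' (by omega) (by omega)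
      subst hpp'
      have hww' : w = w' := by rw [← hpv, ← hpv']
      subst hww'
      have h1 : f (w, true) = (g w).1 := by rw [hfdef]; simp
      have h2 : f (w, false) = (g w).2 := by rw [hfdef]; simp
      rcases b with _ | _ <;> rcases b' with _ | _
      · rfl
      · rw [h2, h1] at heq
        exact absurd heq.symm hz12
      · rw [h2, h1] at heq
        exact absurd heq hz12
      · rfl
    have hcard := Finset.card_le_card_of_injOn f hmaps hinj
    rw [Finset.card_product] at hcard
    simpa [mul_comm] using hcard
  -- cumulative cardinality
  have hSge : ∀ j, 1 ≤ j → j ≤ k → 3 * 2 ^ (j - 1) ≤ (S j).card := by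
    intro j
    induction j with
    | zero => omega
    | succ m ihm =>
      intro h1 h2
      rcases Nat.eq_or_lt_of_le h1 with h | h
      · simpa [← h] using hS1
      · have hm1 : 1 ≤ m := by omega
        have := hstep m hm1 (by omega)
        have := ihm hm1 (by omega)
        have hpow : m + 1 - 1 = (m - 1) + 1 := by omega
        rw [hpow, pow_succ]
        omega
  have hcum : ∀ j, 1 ≤ j → j ≤ k →
      3 * 2 ^ j ≤ ((Finset.range (j + 1)).biUnion S).card + 2 := by
    intro j
    induction j with
    | zero => omega
    | succ m ihm =>
      intro h1 h2
      have hsplit : (Finset.range (m + 2)).biUnion S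
          = S (m + 1) ∪ (Finset.range (m + 1)).biUnion S := by
        rw [Finset.range_add_one, Finset.biUnion_insert]
      have hdisj2 : Disjoint (S (m + 1)) ((Finset.range (m + 1)).biUnion S) := by
        rw [Finset.disjoint_biUnion_right]
        intro i hi
        rw [Finset.mem_range] at hi
        exact hdisj (m + 1) i (by omega) (by omega) (by omega)
      have hcard : ((Finset.range (m + 2)).biUnion S).card
          = (S (m + 1)).card + ((Finset.range (m + 1)).biUnion S).card := by
        rw [hsplit, Finset.card_union_of_disjoint hdisj2]
      rcases Nat.eq_or_lt_of_le h1 with h | h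
      · -- m = 0 : base case j = 1
        have hm0 : m = 0 := by omega
        subst hm0
        have hb : ((Finset.range 1).biUnion S).card = 1 := by
          simp [hS0]
        rw [hcard, hb]
        have := hS1
        norm_num
        omega
      · have hm1 : 1 ≤ m := by omega
        have hih := ihm hm1 (by omega)
        have hsm := hSge (m + 1) (by omega) h2
        have hpow : m + 1 - 1 = m := by omega
        rw [hpow] at hsm
        rw [hcard, pow_succ]
        omega
  have hfin := hcum k hk le_rfl
  have hle : ((Finset.range (k + 1)).biUnion S).card ≤ Fintype.card V :=
    Finset.card_le_univ _
  have h2k : 2 ≤ 2 ^ k := by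
    calc (2:ℕ) = 2 ^ 1 := by norm_num
    _ ≤ 2 ^ k := Nat.pow_le_pow_right (by norm_num) hk
  have : 2 ^ (k + 1) = 2 * 2 ^ k := by rw [pow_succ, mul_comm]
  omega

lemma mindeg [Fintype V] [DecidableEq V] [DecidableRel G.Adj]
    (h4 : 4 ≤ Fintype.card V)
    (h3conn : ∀ S : Set V, S.ncard < 3 → (G.induce Sᶜ).Connected) (v : V) :
    3 ≤ G.degree v := by
  by_contra hdeg
  push_neg at hdeg
  set S : Set V := G.neighborSet v with hSdef
  have hScard : S.ncard < 3 := by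
    have : S.ncard = G.degree v := by
      rw [hSdef, Set.ncard_eq_toFinset_card', SimpleGraph.degree,
        SimpleGraph.neighborFinset_def]
    omega
  have hconn := h3conn S hScard
  have hv : v ∈ Sᶜ := by
    rw [Set.mem_compl_iff, hSdef]
    exact fun h => G.loopless.irrefl v h
  have hcompl : 1 < Sᶜ.ncard := by
    have := Set.ncard_add_ncard_compl S
    have hcard : Nat.card V = Fintype.card V := Nat.card_eq_fintype_card
    omega
  obtain ⟨u, hu, huv⟩ := Set.exists_ne_of_one_lt_ncard hcompl v
  have hreach := hconn.preconnected ⟨v, hv⟩ ⟨u, hu⟩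
  obtain ⟨w⟩ := hreach
  have hnnil : ¬ w.Nil := by
    apply SimpleGraph.Walk.not_nil_of_ne
    intro hvu
    exact huv (congrArg Subtype.val hvu).symm
  have hadj := w.adj_snd hnnil
  have : G.Adj v (w.getVert 1).1 := hadj
  exact (w.getVert 1).2 this

end ShortCycleAux

/-- Balbuena–García-Vázquez. Every 3-connected finite simple graph
of order `n` (at least 4 vertices, and still connected after deleting any set of fewer
than 3 vertices) contains a cycle of length at most `2·log₂ n`. -/
theorem exists_short_cycle_of_three_connected {V : Type} [Fintype V]
    (G : SimpleGraph V) (h4 : 4 ≤ Fintype.card V)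
    (h3conn : ∀ S : Set V, S.ncard < 3 → (G.induce Sᶜ).Connected) :
    ∃ (v : V) (c : G.Walk v v), c.IsCycle ∧
      (c.length : ℝ) ≤ 2 * Real.logb 2 (Fintype.card V) := by
  classical
  set n := Fintype.card V with hndef
  set k := Nat.log 2 n with hkdef
  have hk2 : 2 ≤ k := by
    rw [hkdef]
    rw [Nat.le_log_iff_pow_le (by norm_num) (by omega)]
    omega
  have hdeg : ∀ w, 3 ≤ G.degree w := ShortCycleAux.mindeg h4 h3conn
  have hv0 : Nonempty V := Fintype.card_pos_iff.mp (by omega)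
  obtain ⟨v0⟩ := hv0
  by_cases hcyc : ∃ (v : V) (c : G.Walk v v), c.IsCycle ∧ c.length ≤ 2 * k
  · obtain ⟨v, c, hc, hcl⟩ := hcyc
    refine ⟨v, c, hc, ?_⟩
    have h1 : (c.length : ℝ) ≤ (2 * k : ℕ) := by exact_mod_cast hcl
    refine h1.trans ?_
    push_cast
    have h2 : (k : ℝ) ≤ Real.logb 2 n := Real.natLog_le_logb n 2
    nlinarith [h2]
  · exfalso
    push_neg at hcyc
    have hgirth : ∀ (x : V) (c : G.Walk x x), c.IsCycle → 2 * k < c.length := by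
      intro x c hc
      have := hcyc x c hc
      omega
    have := ShortCycleAux.moore v0 k (by omega) hdeg hgirth
    have hlt : n < 2 ^ (k + 1) := Nat.lt_pow_succ_log_self (by norm_num) n
    omega
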